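/- Let p be a PMF on A, q a PMF on B, x : A, and y : B. Then there exists a coupling of p and q with respect to the relation Φ a b := (a = x ↔ b = y) if and only if p x = q y. (Paper's Theorem 6, Soundness/Completeness of the relational program logic with respect to equality of probabilities.) -/

import Mathlib

open ENNReal Classical

theorem pmf_coupling_iff_eq_prob {A B : Type*} (p : PMF A) (q : PMF B) (x : A) (y : B) :
    (∃ d : PMF (A × B),
        d.map Prod.fst = p ∧ d.map Prod.snd = q ∧
        ∀ z ∈ d.support, (z.1 = x ↔ z.2 = y)) ↔
      p x = q y := by
  constructor
  · rintro ⟨d, hf, hs, hΦ⟩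
    have hx : p x = d (x, y) := by
      rw [← hf, PMF.map_apply]
      refine (tsum_eq_single (x, y) ?_).trans (by simp)
      rintro ⟨a, b⟩ hz
      by_cases ha : x = a
      · subst ha
        simp only [if_pos rfl]
        by_contra hd
        exact hz (Prod.ext rfl ((hΦ _ hd).1 rfl))
      · simp [ha]
    have hy : q y = d (x, y) := by
      rw [← hs, PMF.map_apply]
      refine (tsum_eq_single (x, y) ?_).trans (by simp)
      rintro ⟨a, b⟩ hz
      by_cases hb : y = b
      · subst hb
        simp only [if_pos rfl]
        by_contra hd
        exact hz (Prod.ext ((hΦ _ hd).2 rfl) rfl)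
      · simp [hb]
    rw [hx, hy]
  · intro h
    by_cases hq1 : q y = 1
    · have hp1 : p x = 1 := h.trans hq1
      have hpsup : p.support = {x} := (p.apply_eq_one_iff x).mp (h.trans hq1)
      have hqsup : q.support = {y} := (q.apply_eq_one_iff y).mp hq1
      refine ⟨PMF.pure (x, y), ?_, ?_, ?_⟩
      · rw [PMF.pure_map]
        ext a
        by_cases ha : a = x
        · subst ha; simp [h.trans hq1]
        · have : a ∉ p.support := by simp [hpsup, ha]
          simp only [PMF.mem_support_iff, not_not] at this
          simp [this, PMF.pure_apply, ha]
      · rw [PMF.pure_map]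
        ext b
        by_cases hb : b = y
        · subst hb; simp [hq1]
        · have : b ∉ q.support := by simp [hqsup, hb]
          simp only [PMF.mem_support_iff, not_not] at this
          simp [this, PMF.pure_apply, hb]
      · intro z hz
        simp only [PMF.support_pure, Set.mem_singleton_iff] at hz
        subst hz; simp
    · -- q y < 1
      have hq1' : q y ≠ ⊤ := (q.apply_ne_top y)
      set c : ℝ≥0∞ := (1 - q y)⁻¹ with hc
      have hne0 : 1 - q y ≠ 0 := by
        rw [Ne, tsub_eq_zero_iff_le]
        intro hle
        exact hq1 (le_antisymm (q.coe_le_one y) hle)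
      have hneT : 1 - q y ≠ ⊤ := (lt_of_le_of_lt tsub_le_self one_lt_top).ne
      have hcancel : (1 - q y) * c = 1 := ENNReal.mul_inv_cancel hne0 hneT
      set f : A × B → ℝ≥0∞ := fun z =>
        if z.1 = x then (if z.2 = y then p x else 0)
        else (if z.2 = y then 0 else p z.1 * q z.2 * c) with hfdef
      have hSB : (∑' b, if b = y then 0 else q b) = 1 - q y := by
        have := ENNReal.tsum_eq_add_tsum_ite (f := fun b => q b) y
        rw [q.tsum_coe] at this
        exact (ENNReal.sub_eq_of_eq_add (q.apply_ne_top y) (this.trans (add_comm _ _))).symm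
      have hSA : (∑' a, if a = x then 0 else p a) = 1 - q y := by
        have := ENNReal.tsum_eq_add_tsum_ite (f := fun a => p a) x
        rw [p.tsum_coe] at this
        rw [← h]
        exact (ENNReal.sub_eq_of_eq_add (p.apply_ne_top x) (this.trans (add_comm _ _))).symm
      have hrow : ∀ a, (∑' b, f (a, b)) = p a := by
        intro a
        by_cases ha : a = x
        · subst ha
          simp only [hfdef, if_pos rfl]
          exact (tsum_eq_single y (by intro b hb; simp [hb])).trans (by simp)
        · simp only [hfdef, ha, if_false]
          calc (∑' b, if b = y then 0 else p a * q b * c)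
              = ∑' b, p a * c * (if b = y then 0 else q b) := by
                apply tsum_congr; intro b; split <;> ring_nf
            _ = p a * c * (1 - q y) := by rw [ENNReal.tsum_mul_left, hSB]
            _ = p a * ((1 - q y) * c) := by ring
            _ = p a := by rw [hcancel, mul_one]
      have hsum : (∑' z, f z) = 1 := by
        calc (∑' z : A × B, f z) = ∑' a, ∑' b, f (a, b) :=
            ENNReal.tsum_prod (f := fun a b => f (a, b))
          _ = ∑' a, p a := tsum_congr hrow
          _ = 1 := p.tsum_coe
      refine ⟨⟨f, hsum ▸ ENNReal.summable.hasSum⟩, ?_, ?_, ?_⟩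
      · ext a
        erw [PMF.map_apply]
        show (∑' z : A × B, if a = z.1 then f z else 0) = p a
        calc (∑' z : A × B, if a = z.1 then f z else 0)
            = ∑' a', ∑' b, if a = a' then f (a', b) else 0 :=
              ENNReal.tsum_prod (f := fun a' b => if a = a' then f (a', b) else 0)
          _
            = ∑' a', if a = a' then p a' else 0 := by
              apply tsum_congr; intro a'
              by_cases h' : a = a' <;> simp [h', hrow]
          _ = p a := by
              refine (tsum_eq_single a ?_).trans (by simp)
              intro a' ha'
              simp only [ite_eq_right_iff]
              intro hh; exact absurd hh.symm ha'
      · ext b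
        erw [PMF.map_apply]
        show (∑' z : A × B, if b = z.2 then f z else 0) = q b
        rw [show (∑' z : A × B, if b = z.2 then f z else 0)
            = ∑' a, ∑' b', if b = b' then f (a, b') else 0 from
            ENNReal.tsum_prod (f := fun a b' => if b = b' then f (a, b') else 0)]
        have hcol : ∀ a, (∑' b', if b = b' then f (a, b') else 0) = f (a, b) := by
          intro a
          refine (tsum_eq_single b ?_).trans (by simp)
          intro b' hb'
          simp only [ite_eq_right_iff]
          intro hh; exact absurd hh.symm hb'
        rw [tsum_congr hcol]
        by_cases hb : b = y
        · calc (∑' a, f (a, b)) = ∑' a, if a = x then p x else 0 := by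
                apply tsum_congr; intro a; simp only [hfdef]
                by_cases ha : a = x <;> simp [ha, hb]
            _ = p x := (tsum_eq_single x (by intro a ha; simp [ha])).trans (by simp)
            _ = q b := by rw [h, hb]
        · calc (∑' a, f (a, b)) = ∑' a, q b * c * (if a = x then 0 else p a) := by
                apply tsum_congr; intro a; simp only [hfdef, hb, if_false]
                by_cases ha : a = x <;> [simp [ha]; (simp [ha]; ring)]
            _ = q b * c * (1 - q y) := by rw [ENNReal.tsum_mul_left, hSA]
            _ = q b * ((1 - q y) * c) := by ring
            _ = q b := by rw [hcancel, mul_one]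
      · rintro ⟨a, b⟩ hz
        erw [PMF.mem_support_iff] at hz
        change f (a, b) ≠ 0 at hz
        constructor
        · intro ha
          by_contra hb
          apply hz
          show (if (a, b).1 = x then (if (a, b).2 = y then p x else 0)
            else (if (a, b).2 = y then 0 else p (a, b).1 * q (a, b).2 * c)) = 0
          rw [if_pos ha, if_neg hb]
        · intro hb
          by_contra ha
          apply hz
          show (if (a, b).1 = x then (if (a, b).2 = y then p x else 0)
            else (if (a, b).2 = y then 0 else p (a, b).1 * q (a, b).2 * c)) = 0
          rw [if_neg ha, if_pos hb]
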